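/- Let k ∈ ℕ₀. For every ε > 0 there exists a constant C > 0 (depending only on k and ε) such that for every prime p > 3, every m ∈ ℤ, every M ∈ ℕ and every r ∈ ℕ: |E_{2k,m,M}(p^r) − (1/3)·2^{2k−2}·p^{rk+1}·ϱ| ≤ C · p^{rk + δ/2 + ε}, where ϱ := #{t ∈ ℤ : t ≡ m (mod M), t² = 4p^r} and δ = 1 if k = 0 and δ = 0 otherwise. -/

import Mathlib

open scoped Classical

noncomputable section

namespace HurwitzPaper

/-- Positive definite integral binary quadratic forms `(a, b, c)` of discriminant `-N`. -/
def PDForm (N : ℤ) : Type :=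
  {f : ℤ × ℤ × ℤ // 0 < f.1 ∧ f.2.1 ^ 2 - 4 * f.1 * f.2.2 = -N}

/-- The action of `SL₂(ℤ)` on binary quadratic forms, via `(x, y) ↦ (αx + βy, γx + δy)`. -/
def act (g : Matrix.SpecialLinearGroup (Fin 2) ℤ) (f : ℤ × ℤ × ℤ) : ℤ × ℤ × ℤ :=
  let a := f.1; let b := f.2.1; let c := f.2.2
  let α := (g : Matrix (Fin 2) (Fin 2) ℤ) 0 0
  let β := (g : Matrix (Fin 2) (Fin 2) ℤ) 0 1
  let γ := (g : Matrix (Fin 2) (Fin 2) ℤ) 1 0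
  let δ := (g : Matrix (Fin 2) (Fin 2) ℤ) 1 1
  (a * α ^ 2 + b * α * γ + c * γ ^ 2,
    2 * a * α * β + b * (α * δ + β * γ) + 2 * c * γ * δ,
    a * β ^ 2 + b * β * δ + c * δ ^ 2)

/-- `SL₂(ℤ)`-equivalence classes of positive definite forms of discriminant `-N`. -/
def FormClass (N : ℤ) : Type :=
  Quot fun f g : PDForm N => ∃ γ, act γ f.1 = g.1

/-- The weight of a class: `1/2` if it contains a multiple of `x² + y²`, `1/3` if it
contains a multiple of `x² + xy + y²`, and `1` otherwise. -/
def clsWeight {N : ℤ} (q : FormClass N) : ℚ :=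
  if ∃ l : ℤ, ∃ γ, act γ q.out.1 = (l, 0, l) then 1 / 2
  else if ∃ l : ℤ, ∃ γ, act γ q.out.1 = (l, l, l) then 1 / 3
  else 1

/-- The Hurwitz class number `H(N)`. -/
def H (N : ℤ) : ℚ :=
  if N = 0 then -(1 / 12)
  else if N < 0 then 0
  else ∑ᶠ q : FormClass N, clsWeight q

/-- The moments `H_{κ,m,M}(n) = Σ_{t ≡ m (mod M)} t^κ H(4n - t²)`. -/
def Hmom (κ : ℕ) (m : ℤ) (M : ℕ) (n : ℕ) : ℚ :=
  ∑ᶠ t : ℤ, if (M : ℤ) ∣ t - m then (t : ℚ) ^ κ * H (4 * n - t ^ 2) else 0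

/-- The `k`-th Catalan number `C_k = binom(2k, k)/(k + 1)`. -/
def Ck (k : ℕ) : ℚ := (Nat.choose (2 * k) k : ℚ) / (k + 1)

/-- `𝓗_{κ,m,M}(p; n) = Σ_{t ≡ m (mod M), p ∤ t} t^κ H(4n - t²)`. -/
def Hscr (κ : ℕ) (m : ℤ) (M : ℕ) (p : ℕ) (n : ℕ) : ℚ :=
  ∑ᶠ t : ℤ, if (M : ℤ) ∣ t - m ∧ ¬(p : ℤ) ∣ t then (t : ℚ) ^ κ * H (4 * n - t ^ 2) else 0

/-- The boundary term `E_{κ,m,M}(p^r)`. -/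
def Eterm (κ : ℕ) (m : ℤ) (M : ℕ) (p : ℕ) [Fact p.Prime] (r : ℕ) : ℚ :=
  (if (M : ℤ) ∣ m ∧ κ = 0 ∧ Odd r then H (4 * p) else 0)
    + (if (M : ℤ) ∣ m ∧ κ = 0 ∧ Even r then (1 / 2 : ℚ) * (1 - (legendreSym p (-1) : ℚ))
        else 0)
    + (1 / 3 : ℚ) * (1 - (legendreSym p (-3) : ℚ)) *
        (∑ᶠ t : ℤ, if (M : ℤ) ∣ t - m ∧ t ^ 2 = (p : ℤ) ^ r then (t : ℚ) ^ κ else 0)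
    + ((p : ℚ) - 1) / 12 *
        (∑ᶠ t : ℤ, if (M : ℤ) ∣ t - m ∧ t ^ 2 = 4 * (p : ℤ) ^ r then (t : ℚ) ^ κ else 0)

/-! ### Auxiliary lemmas -/

open Finset in
theorem divisor_bound (ε : ℝ) (hε : 0 < ε) :
    ∃ C : ℝ, 1 ≤ C ∧ ∀ n : ℕ, 0 < n → ((n.divisors.card : ℝ)) ≤ C * (n : ℝ) ^ ε := by
  have hl2 : (0:ℝ) < Real.log 2 := Real.log_pos (by norm_num)
  have hexp : ∀ x : ℝ, 0 ≤ x → x ^ 2 / 4 ≤ Real.exp x := by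
    intro x hx
    have h1 : x / 2 + 1 ≤ Real.exp (x / 2) := Real.add_one_le_exp _
    have h2 : Real.exp x = Real.exp (x / 2) * Real.exp (x / 2) := by
      rw [← Real.exp_add]; ring_nf
    nlinarith [Real.exp_pos (x / 2)]
  obtain ⟨C₀, hC₀1, hC₀⟩ : ∃ C₀ : ℝ, 1 ≤ C₀ ∧ ∀ e : ℕ, (e + 1 : ℝ) ≤ C₀ * (2 : ℝ) ^ ((e : ℝ) * ε) := by
    refine ⟨max 1 (8 / (ε * Real.log 2) ^ 2), le_max_left _ _, fun e => ?_⟩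
    have hx : (0:ℝ) < ε * Real.log 2 := by positivity
    have h2 : (2 : ℝ) ^ ((e : ℝ) * ε) = Real.exp ((e : ℝ) * (ε * Real.log 2)) := by
      rw [Real.rpow_def_of_pos (by norm_num)]; ring_nf
    rw [h2]
    rcases Nat.eq_zero_or_pos e with rfl | he
    · simp only [Nat.cast_zero, zero_mul, Real.exp_zero, mul_one, zero_add]
      exact le_max_left _ _
    · have hX : (0:ℝ) ≤ (e : ℝ) * (ε * Real.log 2) := by positivity
      have h3 := hexp _ hX
      have h4 : (8 / (ε * Real.log 2) ^ 2) ≤ max 1 (8 / (ε * Real.log 2) ^ 2) := le_max_right _ _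
      have he1 : (1:ℝ) ≤ (e:ℝ) := by exact_mod_cast he
      have h5 : ((e : ℝ) * (ε * Real.log 2)) ^ 2 / 4 ≤ Real.exp ((e : ℝ) * (ε * Real.log 2)) := h3
      have hC0pos : (0:ℝ) < 8 / (ε * Real.log 2) ^ 2 := by positivity
      calc (e + 1 : ℝ) ≤ 2 * (e:ℝ)^2 := by nlinarith
        _ = (8 / (ε * Real.log 2) ^ 2) * (((e : ℝ) * (ε * Real.log 2)) ^ 2 / 4) := by
            field_simp; ring
        _ ≤ max 1 (8 / (ε * Real.log 2) ^ 2) * Real.exp ((e : ℝ) * (ε * Real.log 2)) := by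
            apply mul_le_mul h4 h5 (by positivity) (by positivity)
  set K : ℕ := ⌈(2:ℝ) ^ (1/ε)⌉₊ with hK
  refine ⟨C₀ ^ K, one_le_pow₀ hC₀1, fun n hn => ?_⟩
  have hn' : n ≠ 0 := hn.ne'
  have hcard : (n.divisors.card : ℝ) = ∏ p ∈ n.primeFactors, ((n.factorization p : ℝ) + 1) := by
    rw [Nat.card_divisors hn']
    push_cast [Finset.prod_natCast]
    rfl
  have hnval : (n : ℝ) = ∏ p ∈ n.primeFactors, ((p : ℝ)) ^ (n.factorization p) := by
    conv_lhs => rw [← Nat.factorization_prod_pow_eq_self hn']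
    rw [Nat.prod_factorization_eq_prod_primeFactors]
    push_cast
    rfl
  have hrpow : (n : ℝ) ^ ε = ∏ p ∈ n.primeFactors, (((p : ℝ)) ^ (n.factorization p)) ^ ε := by
    rw [hnval, ← Real.finset_prod_rpow _ _ (fun p _ => by positivity) ε]
  have hper : ∀ p ∈ n.primeFactors, ((n.factorization p : ℝ) + 1)
      ≤ (if p < K then C₀ else 1) * (((p : ℝ)) ^ (n.factorization p)) ^ ε := by
    intro p hp
    have hp2 : 2 ≤ p := (Nat.prime_of_mem_primeFactors hp).two_le
    set e := n.factorization p with he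
    have hbase : (((p:ℝ)) ^ e) ^ ε = ((p:ℝ) ^ ε) ^ e := by
      rw [← Real.rpow_natCast ((p:ℝ) ^ ε) e, ← Real.rpow_natCast (p:ℝ) e,
        ← Real.rpow_mul (by positivity), ← Real.rpow_mul (by positivity), mul_comm]
    rw [hbase]
    split_ifs with hpK
    · have h2e : (2:ℝ) ^ ((e:ℝ) * ε) = ((2:ℝ) ^ ε) ^ e := by
        rw [← Real.rpow_natCast ((2:ℝ) ^ ε) e, ← Real.rpow_mul (by norm_num), mul_comm]
      refine (hC₀ e).trans ?_
      rw [h2e]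
      apply mul_le_mul_of_nonneg_left _ (by linarith)
      apply pow_le_pow_left₀ (by positivity)
      apply Real.rpow_le_rpow (by norm_num) (by exact_mod_cast hp2) hε.le
    · push_neg at hpK
      have hKp : (2:ℝ) ^ (1/ε) ≤ (p:ℝ) := by
        calc (2:ℝ) ^ (1/ε) ≤ K := Nat.le_ceil _
          _ ≤ (p:ℝ) := by exact_mod_cast hpK
      have h2 : (2:ℝ) ≤ (p:ℝ) ^ ε := by
        calc (2:ℝ) = ((2:ℝ) ^ (1/ε)) ^ ε := by
              rw [← Real.rpow_mul (by norm_num), one_div_mul_cancel hε.ne', Real.rpow_one]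
          _ ≤ (p:ℝ) ^ ε := Real.rpow_le_rpow (by positivity) hKp hε.le
      rw [one_mul]
      calc ((e:ℝ) + 1) ≤ (2:ℝ) ^ e := by
            have h6 : (e + 1 : ℕ) ≤ 2 ^ e := (Nat.lt_two_pow_self (n := e))
            exact_mod_cast h6
        _ ≤ ((p:ℝ) ^ ε) ^ e := pow_le_pow_left₀ (by norm_num) h2 e
  calc (n.divisors.card : ℝ) = ∏ p ∈ n.primeFactors, ((n.factorization p : ℝ) + 1) := hcard
    _ ≤ ∏ p ∈ n.primeFactors, (if p < K then C₀ else 1) * (((p : ℝ)) ^ (n.factorization p)) ^ ε :=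
        Finset.prod_le_prod (fun p _ => by positivity) hper
    _ = (∏ p ∈ n.primeFactors, (if p < K then C₀ else 1)) * (n:ℝ) ^ ε := by
        rw [Finset.prod_mul_distrib, hrpow]
    _ ≤ C₀ ^ K * (n:ℝ) ^ ε := by
        apply mul_le_mul_of_nonneg_right _ (by positivity)
        calc ∏ p ∈ n.primeFactors, (if p < K then C₀ else 1)
            = C₀ ^ (n.primeFactors.filter (· < K)).card := by
              rw [Finset.prod_ite, Finset.prod_const, Finset.prod_const, one_pow, mul_one]
          _ ≤ C₀ ^ K := by
              apply pow_le_pow_right₀ hC₀1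
              calc (n.primeFactors.filter (· < K)).card ≤ (Finset.range K).card := by
                    apply Finset.card_le_card
                    intro p hp
                    simp only [Finset.mem_filter] at hp
                    exact Finset.mem_range.mpr hp.2
                _ = K := Finset.card_range K

lemma act_act (g h : Matrix.SpecialLinearGroup (Fin 2) ℤ) (x : ℤ × ℤ × ℤ) :
    act h (act g x) = act (g * h) x := by
  obtain ⟨a, b, c⟩ := x
  simp only [act, Matrix.SpecialLinearGroup.coe_mul, Matrix.mul_apply, Fin.sum_univ_two]
  refine Prod.ext ?_ (Prod.ext ?_ ?_) <;> simp <;> ring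

lemma act_one (x : ℤ × ℤ × ℤ) : act 1 x = x := by
  obtain ⟨a, b, c⟩ := x
  simp [act]

def Tmat (n : ℤ) : Matrix.SpecialLinearGroup (Fin 2) ℤ :=
  ⟨!![1, n; 0, 1], by simp [Matrix.det_fin_two]⟩

def Smat : Matrix.SpecialLinearGroup (Fin 2) ℤ :=
  ⟨!![0, -1; 1, 0], by simp [Matrix.det_fin_two]⟩

lemma act_Tmat (n a b c : ℤ) :
    act (Tmat n) (a, b, c) = (a, 2 * a * n + b, a * n ^ 2 + b * n + c) := by
  simp only [act, Tmat]
  norm_num [Matrix.cons_val_zero, Matrix.cons_val_one, Matrix.head_cons]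

lemma act_Smat (a b c : ℤ) : act Smat (a, b, c) = (c, -b, a) := by
  simp only [act, Smat]
  norm_num [Matrix.cons_val_zero, Matrix.cons_val_one, Matrix.head_cons]

/-- Reduction theory of positive definite binary quadratic forms. -/
theorem exists_reduced (N : ℤ) (hN : 0 < N) :
    ∀ fuel : ℕ, ∀ a b c : ℤ, a.toNat ≤ fuel → 0 < a → b ^ 2 - 4 * a * c = -N →
      ∃ (γ : Matrix.SpecialLinearGroup (Fin 2) ℤ) (a' b' c' : ℤ),
        act γ (a, b, c) = (a', b', c') ∧ 0 < a' ∧ |b'| ≤ a' ∧ a' ≤ c' ∧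
          b' ^ 2 - 4 * a' * c' = -N := by
  intro fuel
  induction fuel with
  | zero => intro a b c hle ha _; omega
  | succ fuel ih =>
    intro a b c hle ha hdisc
    set n := (a - b) / (2 * a) with hn
    set s := (a - b) % (2 * a) with hs
    have h2a : 0 < 2 * a := by omega
    have hsplit : s + 2 * a * n = a - b := Int.emod_add_mul_ediv (a - b) (2 * a)
    have hs0 : 0 ≤ s := Int.emod_nonneg _ (by omega)
    have hs1 : s < 2 * a := Int.emod_lt_of_pos _ h2a
    set b' := 2 * a * n + b with hb'
    have hb'eq : b' = a - s := by omega
    have hb'bd : |b'| ≤ a := by rw [abs_le]; omega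
    set c' := a * n ^ 2 + b * n + c with hc'
    have hdisc' : b' ^ 2 - 4 * a * c' = -N := by rw [hb', hc']; ring_nf; linarith [hdisc]
    have hc'pos : 0 < c' := by nlinarith
    rcases le_or_gt a c' with hac | hac
    · exact ⟨Tmat n, a, b', c', by rw [act_Tmat], ha, hb'bd, hac, hdisc'⟩
    · have hrec := ih c' (-b') a (by omega) hc'pos (by ring_nf; ring_nf at hdisc'; linarith)
      obtain ⟨γ', a'', b'', c'', hact, h1, h2, h3, h4⟩ := hrec
      refine ⟨(Tmat n * Smat) * γ', a'', b'', c'', ?_, h1, h2, h3, h4⟩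
      rw [← act_act, ← act_act, act_Tmat, act_Smat, hact]

lemma clsWeight_nonneg {N : ℤ} (q : FormClass N) : 0 ≤ clsWeight q := by
  unfold clsWeight; split_ifs <;> norm_num

lemma clsWeight_le_one {N : ℤ} (q : FormClass N) : clsWeight q ≤ 1 := by
  unfold clsWeight; split_ifs <;> norm_num

theorem H_le_card (N : ℤ) (hN : 0 < N) (F : Finset (ℤ × ℤ × ℤ))
    (hF : ∀ x : ℤ × ℤ × ℤ, 0 < x.1 → |x.2.1| ≤ x.1 → x.1 ≤ x.2.2 →
      x.2.1 ^ 2 - 4 * x.1 * x.2.2 = -N → x ∈ F) :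
    0 ≤ H N ∧ H N ≤ F.card := by
  have hH : H N = ∑ᶠ q : FormClass N, clsWeight q := by
    rw [H, if_neg hN.ne', if_neg (by omega)]
  rcases isEmpty_or_nonempty (FormClass N) with hemp | hne
  · rw [hH, finsum_of_isEmpty]
    exact ⟨le_refl 0, by positivity⟩
  · set g : ↥F → FormClass N := fun x =>
      if h : 0 < x.1.1 ∧ x.1.2.1 ^ 2 - 4 * x.1.1 * x.1.2.2 = -N then
        Quot.mk _ (⟨x.1, h⟩ : PDForm N)
      else Classical.arbitrary _ with hg
    have hsurj : Function.Surjective g := by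
      intro q
      induction q using Quot.ind with
      | _ f =>
        obtain ⟨γ, a', b', c', hact, h1, h2, h3, h4⟩ :=
          exists_reduced N hN (f.1.1.toNat) f.1.1 f.1.2.1 f.1.2.2 le_rfl f.2.1 f.2.2
        have hmem : (a', b', c') ∈ F := hF (a', b', c') h1 h2 h3 h4
        refine ⟨⟨(a', b', c'), hmem⟩, ?_⟩
        have hcond : 0 < a' ∧ b' ^ 2 - 4 * a' * c' = -N := ⟨h1, h4⟩
        have hgval : g ⟨(a', b', c'), hmem⟩ = Quot.mk _ (⟨(a', b', c'), hcond⟩ : PDForm N) := by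
          simp only [hg]
          exact dif_pos hcond
        rw [hgval]
        apply Quot.sound
        refine ⟨γ⁻¹, ?_⟩
        show act γ⁻¹ (a', b', c') = f.1
        rw [← hact, act_act, mul_inv_cancel, act_one]
    haveI : Finite (FormClass N) := Finite.of_surjective g hsurj
    haveI : Fintype (FormClass N) := Fintype.ofFinite _
    rw [hH, finsum_eq_sum_of_fintype]
    constructor
    · exact Finset.sum_nonneg fun q _ => clsWeight_nonneg q
    · calc ∑ q : FormClass N, clsWeight q ≤ (Finset.univ : Finset (FormClass N)).card • (1 : ℚ) :=
          Finset.sum_le_card_nsmul _ _ _ (fun q _ => clsWeight_le_one q)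
        _ = Fintype.card (FormClass N) := by simp
        _ ≤ F.card := by
            have h1 : Nat.card (FormClass N) ≤ Nat.card ↥F :=
              Nat.card_le_card_of_surjective g hsurj
            rw [Nat.card_eq_fintype_card] at h1
            rw [Nat.card_eq_finsetCard] at h1
            exact_mod_cast h1


set_option maxHeartbeats 1000000 in
theorem H_four_p_bound (ε : ℝ) (hε : 0 < ε) :
    ∃ C : ℝ, 1 ≤ C ∧ ∀ p : ℕ, 0 < p →
      0 ≤ H (4 * p) ∧ (H (4 * p) : ℝ) ≤ C * (p : ℝ) ^ ((1:ℝ)/2 + ε) := by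
  obtain ⟨C, hC1, hC⟩ := divisor_bound ε hε
  have h8 : (1:ℝ) ≤ (8:ℝ) ^ ε := Real.one_le_rpow (by norm_num) hε.le
  refine ⟨5 * C * (8:ℝ) ^ ε, by nlinarith, fun p hp => ?_⟩
  set B : ℤ := (Nat.sqrt (4 * p) : ℤ) with hB
  have hB0 : 0 ≤ B := by positivity
  set F : Finset (ℤ × ℤ × ℤ) := (Finset.Icc (-B) B).biUnion
    (fun b => (Nat.divisors (b ^ 2 + 4 * p).toNat).image
      (fun a : ℕ => ((a : ℤ), b, (b ^ 2 + 4 * p) / (4 * (a : ℤ))))) with hFdef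
  have hN : (0:ℤ) < 4 * p := by positivity
  have hF : ∀ x : ℤ × ℤ × ℤ, 0 < x.1 → |x.2.1| ≤ x.1 → x.1 ≤ x.2.2 →
      x.2.1 ^ 2 - 4 * x.1 * x.2.2 = -(4 * p) → x ∈ F := by
    rintro ⟨a, b, c⟩ ha hba hac hdisc
    simp only at ha hba hac hdisc
    have hkey : b ^ 2 + 4 * p = 4 * a * c := by linarith
    have hcpos : 0 < c := lt_of_lt_of_le ha hac
    have hbsq : b ^ 2 ≤ 4 * p := by
      have h1 : b ^ 2 ≤ a ^ 2 := by nlinarith [sq_abs b, abs_nonneg b]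
      have h2 : a ^ 2 ≤ a * c := by nlinarith
      nlinarith [sq_nonneg b]
    have hmemb : b ∈ Finset.Icc (-B) B := by
      have h2 : b.natAbs * b.natAbs ≤ 4 * p := by
        have h0 : (b.natAbs * b.natAbs : ℤ) ≤ ((4 * p : ℕ) : ℤ) := by
          have hh := Int.natAbs_mul_self (a := b)
          push_cast at hh ⊢
          nlinarith
        exact_mod_cast h0
      have h3 : b.natAbs ≤ Nat.sqrt (4 * p) := Nat.le_sqrt.mpr h2
      have h4 : |b| ≤ B := by
        rw [hB, Int.abs_eq_natAbs]
        exact_mod_cast h3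
      rw [Finset.mem_Icc]
      exact abs_le.mp h4
    rw [hFdef]
    apply Finset.mem_biUnion.mpr
    refine ⟨b, hmemb, ?_⟩
    apply Finset.mem_image.mpr
    refine ⟨a.toNat, ?_, ?_⟩
    · rw [Nat.mem_divisors]
      constructor
      · have hd : (a.toNat : ℤ) ∣ ((b ^ 2 + 4 * p).toNat : ℤ) := by
          rw [Int.toNat_of_nonneg ha.le, Int.toNat_of_nonneg (by positivity)]
          exact ⟨4 * c, by linarith⟩
        exact_mod_cast hd
      · have hpos : (0:ℤ) < b ^ 2 + 4 * p := by positivity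
        omega
    · have h4a : (4 * a) ≠ (0:ℤ) := by omega
      have hdivc : (b ^ 2 + 4 * p) / (4 * a) = c := by
        rw [hkey, show 4 * a * c = (4 * a) * c by ring,
          Int.mul_ediv_cancel_left _ h4a]
      rw [Int.toNat_of_nonneg ha.le, hdivc]
  obtain ⟨hH0, hHle⟩ := H_le_card (4 * p) hN F hF
  have hHle' : (H (4 * p) : ℝ) ≤ (F.card : ℝ) := by exact_mod_cast hHle
  refine ⟨hH0, ?_⟩
  have hcard0 : F.card ≤ ∑ b ∈ Finset.Icc (-B) B, (Nat.divisors (b ^ 2 + 4 * p).toNat).card := by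
    rw [hFdef]
    refine Finset.card_biUnion_le.trans (Finset.sum_le_sum fun b _ => Finset.card_image_le)
  have hcard1 : (F.card : ℝ) ≤ ∑ b ∈ Finset.Icc (-B) B, ((Nat.divisors (b ^ 2 + 4 * p).toNat).card : ℝ) := by
    exact_mod_cast hcard0
  have hterm : ∀ b ∈ Finset.Icc (-B) B,
      ((Nat.divisors (b ^ 2 + 4 * p).toNat).card : ℝ) ≤ C * (8:ℝ) ^ ε * (p:ℝ) ^ ε := by
    intro b hb
    rw [Finset.mem_Icc] at hb
    have habs : |b| ≤ B := abs_le.mpr hb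
    have hbsq : b ^ 2 ≤ 4 * p := by
      have h1 : b ^ 2 ≤ B ^ 2 := by nlinarith [sq_abs b, abs_nonneg b]
      have h2 : B ^ 2 ≤ 4 * p := by
        rw [hB]
        push_cast
        nlinarith [Nat.sqrt_le' (4 * p)]
      linarith
    set n := (b ^ 2 + 4 * p).toNat with hn
    have hnpos : 0 < n := by
      have hpos : (0:ℤ) < b ^ 2 + 4 * p := by positivity
      omega
    have hnle : (n : ℝ) ≤ 8 * p := by
      have h1 : (n : ℤ) = b ^ 2 + 4 * p := Int.toNat_of_nonneg (by positivity)
      have h2 : (n : ℤ) ≤ 8 * p := by omega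
      exact_mod_cast h2
    calc ((Nat.divisors n).card : ℝ) ≤ C * (n : ℝ) ^ ε := hC n hnpos
      _ ≤ C * ((8 * p : ℝ)) ^ ε := by
          apply mul_le_mul_of_nonneg_left _ (by linarith)
          exact Real.rpow_le_rpow (by positivity) hnle hε.le
      _ = C * (8:ℝ) ^ ε * (p:ℝ) ^ ε := by
          rw [Real.mul_rpow (by norm_num) (by positivity), mul_assoc]
  have hcardIcc : ((Finset.Icc (-B) B).card : ℝ) ≤ 5 * (p:ℝ) ^ ((1:ℝ)/2) := by
    have h1 : (Finset.Icc (-B) B).card = (2 * B + 1).toNat := by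
      rw [Int.card_Icc]
      congr 1
      omega
    have hBr : (B : ℝ) ≤ 2 * (p:ℝ) ^ ((1:ℝ)/2) := by
      have hB2 : (B:ℝ) ^ 2 ≤ 4 * p := by
        have h2 : B ^ 2 ≤ 4 * (p:ℤ) := by
          rw [hB]; push_cast
          nlinarith [Nat.sqrt_le' (4 * p)]
        exact_mod_cast h2
      have hs : (B:ℝ) ≤ Real.sqrt (4 * p) :=
        (Real.le_sqrt (by exact_mod_cast hB0) (by positivity)).mpr hB2
      calc (B:ℝ) ≤ Real.sqrt (4 * p) := hs
        _ = 2 * Real.sqrt p := by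
            rw [show ((4:ℝ) * p) = 2^2 * p by ring, Real.sqrt_mul (by positivity),
              Real.sqrt_sq (by norm_num)]
        _ = 2 * (p:ℝ) ^ ((1:ℝ)/2) := by rw [Real.sqrt_eq_rpow]
    have hp1 : (1:ℝ) ≤ (p:ℝ) ^ ((1:ℝ)/2) :=
      Real.one_le_rpow (by exact_mod_cast hp) (by norm_num)
    have h2 : ((2 * B + 1).toNat : ℝ) = 2 * (B:ℝ) + 1 := by
      have h3 : ((2 * B + 1).toNat : ℤ) = 2 * B + 1 := Int.toNat_of_nonneg (by omega)
      exact_mod_cast h3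
    rw [h1, h2]
    linarith
  refine hHle'.trans (hcard1.trans ?_)
  have hA : ∑ b ∈ Finset.Icc (-B) B, ((Nat.divisors (b ^ 2 + 4 * p).toNat).card : ℝ)
      ≤ ((Finset.Icc (-B) B).card : ℝ) * (C * (8:ℝ) ^ ε * (p:ℝ) ^ ε) := by
    refine (Finset.sum_le_card_nsmul _ _ _ hterm).trans ?_
    rw [nsmul_eq_mul]
  have hB2 : ((Finset.Icc (-B) B).card : ℝ) * (C * (8:ℝ) ^ ε * (p:ℝ) ^ ε)
      ≤ (5 * (p:ℝ) ^ ((1:ℝ)/2)) * (C * (8:ℝ) ^ ε * (p:ℝ) ^ ε) := by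
    apply mul_le_mul_of_nonneg_right hcardIcc
    positivity
  have hC2 : (5 * (p:ℝ) ^ ((1:ℝ)/2)) * (C * (8:ℝ) ^ ε * (p:ℝ) ^ ε)
      = 5 * C * (8:ℝ) ^ ε * (p:ℝ) ^ ((1:ℝ)/2 + ε) := by
    rw [Real.rpow_add (by exact_mod_cast hp)]
    ring
  rw [← hC2]
  exact hA.trans hB2

lemma sq_mem_pair {d t : ℤ} (ht : t ^ 2 = d) :
    t = Int.sqrt d ∨ t = -Int.sqrt d := by
  have h1 : Int.sqrt d = t.natAbs := by
    rw [← ht, sq, Int.sqrt_eq]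
  rcases Int.natAbs_eq t with h | h
  · left; rw [h1, ← h]
  · right; rw [h1, ← h]

lemma finsum_sq_eq (m : ℤ) (M : ℕ) (d : ℤ) (f : ℤ → ℚ) :
    ∑ᶠ t : ℤ, (if (M : ℤ) ∣ t - m ∧ t ^ 2 = d then f t else 0)
      = ∑ t ∈ ({Int.sqrt d, -Int.sqrt d} : Finset ℤ),
          (if (M : ℤ) ∣ t - m ∧ t ^ 2 = d then f t else 0) := by
  apply finsum_eq_finset_sum_of_support_subset
  intro t ht
  simp only [Function.mem_support, ne_eq, ite_eq_right_iff, not_forall] at ht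
  obtain ⟨⟨_, h2⟩, _⟩ := ht
  simp only [Finset.coe_insert, Finset.coe_singleton, Set.mem_insert_iff, Set.mem_singleton_iff]
  exact sq_mem_pair h2

lemma abs_finsum_sq_le (m : ℤ) (M : ℕ) (d : ℤ) (κ : ℕ) (V : ℚ) (hV : 0 ≤ V)
    (hval : ∀ t : ℤ, t ^ 2 = d → |(t:ℚ) ^ κ| ≤ V) :
    |∑ᶠ t : ℤ, (if (M : ℤ) ∣ t - m ∧ t ^ 2 = d then (t:ℚ) ^ κ else 0)| ≤ 2 * V := by
  rw [finsum_sq_eq m M d]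
  refine (Finset.abs_sum_le_sum_abs _ _).trans ?_
  have hcard : ({Int.sqrt d, -Int.sqrt d} : Finset ℤ).card ≤ 2 :=
    (Finset.card_insert_le _ _).trans (by simp)
  have hb : ∀ t ∈ ({Int.sqrt d, -Int.sqrt d} : Finset ℤ),
      |if (M : ℤ) ∣ t - m ∧ t ^ 2 = d then (t:ℚ) ^ κ else 0| ≤ V := by
    intro t _
    split_ifs with h
    · exact hval t h.2
    · simpa using hV
  calc ∑ t ∈ ({Int.sqrt d, -Int.sqrt d} : Finset ℤ), |if (M : ℤ) ∣ t - m ∧ t ^ 2 = d then (t:ℚ) ^ κ else 0|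
      ≤ ({Int.sqrt d, -Int.sqrt d} : Finset ℤ).card • V := Finset.sum_le_card_nsmul _ _ _ hb
    _ ≤ 2 * V := by
        rw [nsmul_eq_mul]
        have h5 : (({Int.sqrt d, -Int.sqrt d} : Finset ℤ).card : ℚ) ≤ 2 := by exact_mod_cast hcard
        nlinarith

lemma nat_card_sq (m : ℤ) (M : ℕ) (d : ℤ) :
    Nat.card {t : ℤ // (M : ℤ) ∣ t - m ∧ t ^ 2 = d}
      = (({Int.sqrt d, -Int.sqrt d} : Finset ℤ).filter (fun t => (M : ℤ) ∣ t - m ∧ t ^ 2 = d)).card := by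
  have hseteq : {t : ℤ | (M : ℤ) ∣ t - m ∧ t ^ 2 = d}
      = ↑(({Int.sqrt d, -Int.sqrt d} : Finset ℤ).filter (fun t => (M : ℤ) ∣ t - m ∧ t ^ 2 = d)) := by
    ext t
    simp only [Set.mem_setOf_eq, Finset.coe_filter, Finset.mem_insert, Finset.mem_singleton]
    constructor
    · intro h
      exact ⟨sq_mem_pair h.2, h⟩
    · intro h
      exact h.2
  rw [← Set.ncard_coe_finset, ← Nat.card_coe_set_eq]
  congr 1
  rw [← hseteq]
  rfl

lemma card_sq_le_two (m : ℤ) (M : ℕ) (d : ℤ) :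
    Nat.card {t : ℤ // (M : ℤ) ∣ t - m ∧ t ^ 2 = d} ≤ 2 := by
  rw [nat_card_sq]
  refine (Finset.card_filter_le _ _).trans ?_
  exact (Finset.card_insert_le _ _).trans (by simp)

lemma finsum_sq_card (m : ℤ) (M : ℕ) (d : ℤ) (κ : ℕ) (V : ℚ)
    (hval : ∀ t : ℤ, t ^ 2 = d → (t:ℚ) ^ κ = V) :
    ∑ᶠ t : ℤ, (if (M : ℤ) ∣ t - m ∧ t ^ 2 = d then (t:ℚ) ^ κ else 0)
      = (Nat.card {t : ℤ // (M : ℤ) ∣ t - m ∧ t ^ 2 = d} : ℚ) * V := by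
  rw [finsum_sq_eq m M d]
  rw [Finset.sum_ite, Finset.sum_const_zero, add_zero]
  rw [nat_card_sq]
  calc ∑ t ∈ (({Int.sqrt d, -Int.sqrt d} : Finset ℤ).filter (fun t => (M : ℤ) ∣ t - m ∧ t ^ 2 = d)), (t:ℚ) ^ κ
      = ∑ t ∈ (({Int.sqrt d, -Int.sqrt d} : Finset ℤ).filter (fun t => (M : ℤ) ∣ t - m ∧ t ^ 2 = d)), V := by
        apply Finset.sum_congr rfl
        intro t ht
        rw [Finset.mem_filter] at ht
        exact hval t ht.2.2
    _ = _ := by rw [Finset.sum_const, nsmul_eq_mul]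


set_option maxHeartbeats 1600000 in
/-- Lemma 4.2: `E_{2k,m,M}(p^r) = (1/3) 2^{2k-2} p^{rk+1} ϱ_{m,M}(p^r) + O_{k,ε}(p^{rk+δ_{k=0}/2+ε})`. -/
theorem Eterm_asymptotic (k : ℕ) (ε : ℝ) (hε : 0 < ε) :
    ∃ C : ℝ, 0 < C ∧ ∀ (p : ℕ) (hp : p.Prime), 3 < p → ∀ (m : ℤ) (M : ℕ), 0 < M →
      ∀ r : ℕ, 0 < r →
        letI : Fact p.Prime := ⟨hp⟩
        |(Eterm (2 * k) m M p r : ℝ) -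
            (1 / 3 : ℝ) * (2 : ℝ) ^ (2 * (k : ℤ) - 2) * (p : ℝ) ^ (r * k + 1) *
              (Nat.card {t : ℤ // (M : ℤ) ∣ t - m ∧ t ^ 2 = 4 * (p : ℤ) ^ r} : ℝ)| ≤
          C * (p : ℝ) ^ ((r * k : ℝ) + (if k = 0 then (1 : ℝ) else 0) / 2 + ε) := by
  obtain ⟨CH, hCH1, hCH⟩ := H_four_p_bound ε hε
  have h4kpos : (0:ℝ) < (4:ℝ) ^ k := by positivity
  refine ⟨CH + 1 + 4/3 + (4:ℝ) ^ k / 6, by linarith, ?_⟩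
  intro p hp hp3 m M hM r hr
  haveI : Fact p.Prime := ⟨hp⟩
  have hp0 : 0 < p := by omega
  have hp0R : (0:ℝ) < p := by exact_mod_cast hp0
  have hp1R : (1:ℝ) ≤ p := by exact_mod_cast hp0
  have hite0 : (0:ℝ) ≤ (if k = 0 then (1:ℝ) else 0) := by split <;> norm_num
  set X : ℝ := (p : ℝ) ^ ((r * k : ℝ) + (if k = 0 then (1 : ℝ) else 0) / 2 + ε) with hX
  have hX0 : 0 < X := Real.rpow_pos_of_pos hp0R _
  have hX1 : 1 ≤ X := Real.one_le_rpow hp1R (by positivity)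
  have hprkX : (p:ℝ) ^ (r * k) ≤ X := by
    rw [hX, ← Real.rpow_natCast (p:ℝ) (r * k)]
    apply Real.rpow_le_rpow_of_exponent_le hp1R
    push_cast
    linarith
  -- evaluate/bound the two finsums
  have hd2 : (0:ℤ) < 4 * (p:ℤ) ^ r := by positivity
  have hS3 : |∑ᶠ t : ℤ, if (M : ℤ) ∣ t - m ∧ t ^ 2 = (p : ℤ) ^ r then (t : ℚ) ^ (2 * k) else 0|
      ≤ 2 * (p:ℚ) ^ (r * k) := by
    refine abs_finsum_sq_le m M ((p:ℤ) ^ r) (2 * k)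
      ((p:ℚ) ^ (r * k)) (by positivity) ?_
    intro t ht
    have h2 : ((t:ℚ)) ^ 2 = ((p:ℚ)) ^ r := by exact_mod_cast congrArg (fun z : ℤ => (z:ℚ)) ht
    have h3 : (t:ℚ) ^ (2 * k) = (p:ℚ) ^ (r * k) := by
      rw [pow_mul, h2, ← pow_mul]
    rw [h3, abs_of_nonneg (by positivity)]
  set ϱ : ℕ := Nat.card {t : ℤ // (M : ℤ) ∣ t - m ∧ t ^ 2 = 4 * (p : ℤ) ^ r} with hϱ
  have hS4 : (∑ᶠ t : ℤ, if (M : ℤ) ∣ t - m ∧ t ^ 2 = 4 * (p : ℤ) ^ r then (t : ℚ) ^ (2 * k) else 0)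
      = (ϱ : ℚ) * ((4:ℚ) ^ k * (p:ℚ) ^ (r * k)) := by
    refine finsum_sq_card m M (4 * (p:ℤ) ^ r) (2 * k) _ ?_
    intro t ht
    have h2 : ((t:ℚ)) ^ 2 = 4 * ((p:ℚ)) ^ r := by exact_mod_cast congrArg (fun z : ℤ => (z:ℚ)) ht
    rw [pow_mul, h2, mul_pow, ← pow_mul]
  have hϱ2 : ϱ ≤ 2 := card_sq_le_two m M (4 * (p:ℤ) ^ r)
  have hϱ2R : (ϱ : ℝ) ≤ 2 := by exact_mod_cast hϱ2
  -- legendre symbol bounds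
  have hleg1 : |(legendreSym p (-1) : ℝ)| ≤ 1 := by
    have hne : ((-1 : ℤ) : ZMod p) ≠ 0 := by
      haveI : Fact (1 < p) := ⟨by omega⟩
      intro h
      rw [Int.cast_neg, Int.cast_one, neg_eq_zero] at h
      exact one_ne_zero h
    rcases legendreSym.eq_one_or_neg_one p hne with h | h <;> rw [h] <;> norm_num
  have hleg3 : |(legendreSym p (-3) : ℝ)| ≤ 1 := by
    have hne : ((-3 : ℤ) : ZMod p) ≠ 0 := by
      intro h
      rw [ZMod.intCast_zmod_eq_zero_iff_dvd] at h
      have h3 : (p:ℤ) ∣ 3 := dvd_neg.mp h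
      have := Int.le_of_dvd (by norm_num) h3
      omega
    rcases legendreSym.eq_one_or_neg_one p hne with h | h <;> rw [h] <;> norm_num
  -- the decomposition of Eterm
  have hE : Eterm (2 * k) m M p r
      = (if (M : ℤ) ∣ m ∧ 2 * k = 0 ∧ Odd r then H (4 * p) else 0)
        + (if (M : ℤ) ∣ m ∧ 2 * k = 0 ∧ Even r then (1 / 2 : ℚ) * (1 - (legendreSym p (-1) : ℚ))
            else 0)
        + (1 / 3 : ℚ) * (1 - (legendreSym p (-3) : ℚ)) *
            (∑ᶠ t : ℤ, if (M : ℤ) ∣ t - m ∧ t ^ 2 = (p : ℤ) ^ r then (t : ℚ) ^ (2 * k) else 0)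
        + ((p : ℚ) - 1) / 12 *
            (∑ᶠ t : ℤ, if (M : ℤ) ∣ t - m ∧ t ^ 2 = 4 * (p : ℤ) ^ r then (t : ℚ) ^ (2 * k) else 0) :=
    rfl
  -- main term identity
  have h2pow : (2:ℝ) ^ (2 * (k : ℤ) - 2) = (4:ℝ) ^ k / 4 := by
    rw [show 2 * (k:ℤ) - 2 = ((2 * k : ℕ) : ℤ) - ((2 : ℕ) : ℤ) by push_cast; ring,
      zpow_sub₀ (by norm_num : (2:ℝ) ≠ 0), zpow_natCast, zpow_natCast, pow_mul]
    norm_num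
  have hMain : (1 / 3 : ℝ) * (2 : ℝ) ^ (2 * (k : ℤ) - 2) * (p : ℝ) ^ (r * k + 1) * (ϱ : ℝ)
      = ((p:ℝ) / 12) * ((4:ℝ) ^ k * (p:ℝ) ^ (r * k)) * (ϱ : ℝ) := by
    rw [h2pow, pow_succ]
    ring
  -- componentwise bounds (as reals)
  set T1 : ℚ := (if (M : ℤ) ∣ m ∧ 2 * k = 0 ∧ Odd r then H (4 * p) else 0) with hT1def
  set T2 : ℚ := (if (M : ℤ) ∣ m ∧ 2 * k = 0 ∧ Even r then (1 / 2 : ℚ) * (1 - (legendreSym p (-1) : ℚ))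
      else 0) with hT2def
  set S3 : ℚ := (∑ᶠ t : ℤ, if (M : ℤ) ∣ t - m ∧ t ^ 2 = (p : ℤ) ^ r then (t : ℚ) ^ (2 * k) else 0)
    with hS3def
  have hT1 : |(T1 : ℝ)| ≤ CH * X := by
    rw [hT1def]
    by_cases hc : (M : ℤ) ∣ m ∧ 2 * k = 0 ∧ Odd r
    · have hk0 : k = 0 := by omega
      obtain ⟨hH0, hHb⟩ := hCH p hp0
      rw [if_pos hc]
      have hXeq : (p:ℝ) ^ ((1:ℝ)/2 + ε) = X := by
        rw [hX, hk0]
        norm_num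
      rw [abs_of_nonneg (by exact_mod_cast hH0)]
      calc ((H (4 * p) : ℚ) : ℝ) ≤ CH * (p:ℝ) ^ ((1:ℝ)/2 + ε) := hHb
        _ = CH * X := by rw [hXeq]
    · rw [if_neg hc]
      simp only [Rat.cast_zero, abs_zero]
      positivity
  have hT2 : |(T2 : ℝ)| ≤ X := by
    rw [hT2def]
    by_cases hc : (M : ℤ) ∣ m ∧ 2 * k = 0 ∧ Even r
    · rw [if_pos hc]
      push_cast
      rw [abs_mul]
      have h1 : |(1:ℝ)/2| = 1/2 := by norm_num
      have h2 : |1 - (legendreSym p (-1) : ℝ)| ≤ 2 := by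
        have := abs_le.mp hleg1
        rw [abs_le]
        constructor <;> linarith
      calc |(1:ℝ)/2| * |1 - (legendreSym p (-1) : ℝ)| ≤ (1/2) * 2 := by
            rw [h1]; nlinarith [abs_nonneg (1 - (legendreSym p (-1) : ℝ))]
        _ = 1 := by norm_num
        _ ≤ X := hX1
    · rw [if_neg hc]
      simp only [Rat.cast_zero, abs_zero]
      positivity
  have hS3R : |(S3 : ℝ)| ≤ 2 * (p:ℝ) ^ (r * k) := by
    have h1 : |(S3 : ℝ)| = ((|S3| : ℚ) : ℝ) := by push_cast; rfl
    rw [h1]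
    have h2 : ((2 * (p:ℚ) ^ (r * k) : ℚ) : ℝ) = 2 * (p:ℝ) ^ (r * k) := by push_cast; rfl
    rw [← h2]
    exact_mod_cast hS3
  have hT3 : |(1 / 3 : ℝ) * (1 - (legendreSym p (-3) : ℝ)) * (S3 : ℝ)| ≤ (4/3) * X := by
    rw [abs_mul, abs_mul]
    have h2 : |1 - (legendreSym p (-3) : ℝ)| ≤ 2 := by
      have := abs_le.mp hleg3
      rw [abs_le]
      constructor <;> linarith
    have h3 : |(1:ℝ)/3| = 1/3 := by norm_num
    have h4 : (p:ℝ) ^ (r * k) ≤ X := hprkX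
    have h5 : |(S3:ℝ)| ≤ 2 * X := hS3R.trans (by nlinarith)
    rw [h3]
    nlinarith [abs_nonneg (1 - (legendreSym p (-3) : ℝ)), abs_nonneg (S3:ℝ)]
  -- put everything together
  have hsplit : (Eterm (2 * k) m M p r : ℝ) -
      (1 / 3 : ℝ) * (2 : ℝ) ^ (2 * (k : ℤ) - 2) * (p : ℝ) ^ (r * k + 1) * (ϱ : ℝ)
      = (T1 : ℝ) + (T2 : ℝ) + (1 / 3 : ℝ) * (1 - (legendreSym p (-3) : ℝ)) * (S3 : ℝ)
        - (1/12) * ((4:ℝ) ^ k * (p:ℝ) ^ (r * k)) * (ϱ : ℝ) := by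
    rw [hMain, hE, hS4]
    push_cast
    ring
  rw [hsplit]
  have hlast : (0:ℝ) ≤ (1/12) * ((4:ℝ) ^ k * (p:ℝ) ^ (r * k)) * (ϱ : ℝ) := by positivity
  have hlast2 : (1/12) * ((4:ℝ) ^ k * (p:ℝ) ^ (r * k)) * (ϱ : ℝ) ≤ ((4:ℝ) ^ k / 6) * X := by
    have h1 : (p:ℝ) ^ (r * k) * (ϱ:ℝ) ≤ X * 2 :=
      mul_le_mul hprkX hϱ2R (Nat.cast_nonneg ϱ) hX0.le
    calc (1/12) * ((4:ℝ) ^ k * (p:ℝ) ^ (r * k)) * (ϱ : ℝ)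
        = (1/12) * (4:ℝ) ^ k * ((p:ℝ) ^ (r * k) * (ϱ:ℝ)) := by ring
      _ ≤ (1/12) * (4:ℝ) ^ k * (X * 2) := by
          apply mul_le_mul_of_nonneg_left h1 (by positivity)
      _ = ((4:ℝ) ^ k / 6) * X := by ring
  have e1 := abs_le.mp hT1
  have e2 := abs_le.mp hT2
  have e3 := abs_le.mp hT3
  have hCX : (CH + 1 + 4/3 + (4:ℝ) ^ k / 6) * X = CH * X + X + (4/3) * X + ((4:ℝ) ^ k / 6) * X := by
    ring
  rw [abs_le, hCX]
  constructor
  · linarith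
  · linarith


end HurwitzPaper
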